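/- Let $x > 0$, $t > 0$, $M > 0$. For any control $\omega \in L^2(0,t)$ with $\int_0^t \tfrac12 \omega(s)^2\,ds \leq M$, let $z_\omega$ solve the backward reflected dynamics $z_\omega(t) = x$, $(\dot z_\omega(s) - \omega(s))(q - z_\omega(s)) \leq 0$ for all $q \geq 0$ and a.e. $s$. Then for every $\varepsilon \in (0, x)$, setting $\tau_0 = \left(\frac{\varepsilon}{\sqrt{2M}}\right)^2$, we have $|z_\omega(t-\tau) - x| \leq \varepsilon$ for all $0 \leq \tau \leq \tau_0$; in particular the modulus of continuity of $z_\omega$ at the terminal time $t$ is uniform over all controls of energy at most $M$. -/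

import Mathlib

open Set MeasureTheory

/-- Key estimate: on a subinterval where `z` stays positive (in the interior),
the trajectory increment is controlled by `√(2M(b-a))`. -/
lemma key_est (t M : ℝ) (hM : 0 < M) (ω z z' : ℝ → ℝ)
    (hint : IntervalIntegrable z' volume 0 t)
    (hAC : ∀ s ∈ Icc 0 t, z s = z 0 + ∫ r in (0:ℝ)..s, z' r)
    (hVI : ∀ᵐ s ∂(volume.restrict (Icc (0:ℝ) t)),
        ∀ q : ℝ, 0 ≤ q → (z' s - ω s) * (q - z s) ≤ 0)
    (hω2 : IntervalIntegrable (fun s => ω s ^ 2) volume 0 t)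
    (hE2 : ∫ s in (0:ℝ)..t, ω s ^ 2 ≤ 2 * M)
    (a b : ℝ) (ha : 0 ≤ a) (hab : a ≤ b) (hbt : b ≤ t)
    (hpos : ∀ s ∈ Ioo a b, 0 < z s) :
    |z b - z a| ≤ Real.sqrt (2 * M * (b - a)) := by
  rcases eq_or_lt_of_le hab with rfl | hab'
  · simp [Real.sqrt_nonneg]
  have h0t : (0:ℝ) ≤ t := le_trans (le_trans ha hab) hbt
  have haIcc : a ∈ Icc (0:ℝ) t := ⟨ha, le_trans hab hbt⟩
  have hbIcc : b ∈ Icc (0:ℝ) t := ⟨le_trans ha hab, hbt⟩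
  -- integrability of z' on subintervals
  have hsub : ∀ c d : ℝ, c ∈ Icc (0:ℝ) t → d ∈ Icc (0:ℝ) t →
      IntervalIntegrable z' volume c d := by
    intro c d hc hd
    refine hint.mono_set ?_
    apply uIcc_subset_uIcc <;> rw [uIcc_of_le h0t] <;> assumption
  have h0Icc : (0:ℝ) ∈ Icc (0:ℝ) t := ⟨le_refl 0, h0t⟩
  -- z b - z a = ∫_a^b z'
  have hzdiff : z b - z a = ∫ s in a..b, z' s := by
    rw [hAC a haIcc, hAC b hbIcc]
    have := intervalIntegral.integral_interval_sub_left
      (hsub 0 b h0Icc hbIcc) (hsub 0 a h0Icc haIcc)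
    linarith [this]
  -- a.e. equality z' = ω on uIoc a b
  have haeIcc : ∀ᵐ s : ℝ, s ∈ Icc (0:ℝ) t →
      ∀ q : ℝ, 0 ≤ q → (z' s - ω s) * (q - z s) ≤ 0 :=
    (ae_restrict_iff' measurableSet_Icc).mp hVI
  have hneb : ∀ᵐ s : ℝ, s ≠ b := by
    rw [ae_iff]
    simp only [not_not]
    have : {s : ℝ | s = b} = {b} := by ext s; simp
    rw [this]
    exact measure_singleton b
  have haeeq : ∀ᵐ s : ℝ, s ∈ Set.uIoc a b → z' s = ω s := by
    filter_upwards [haeIcc, hneb] with s hs hsb hmem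
    rw [Set.uIoc_of_le hab] at hmem
    have hsIoo : s ∈ Ioo a b := ⟨hmem.1, lt_of_le_of_ne hmem.2 hsb⟩
    have hzs : 0 < z s := hpos s hsIoo
    have hsIcc : s ∈ Icc (0:ℝ) t :=
      ⟨le_trans ha hsIoo.1.le, le_trans hsIoo.2.le hbt⟩
    have h1 := hs hsIcc 0 le_rfl
    have h2 := hs hsIcc (2 * z s) (by linarith)
    have heq : (z' s - ω s) * z s = 0 := by nlinarith
    rcases mul_eq_zero.mp heq with h | h
    · linarith
    · linarith
  have hzωint : IntervalIntegrable ω volume a b :=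
    (hsub a b haIcc hbIcc).congr_ae ((ae_restrict_iff' measurableSet_uIoc).mpr haeeq)
  have hintω : ∫ s in a..b, z' s = ∫ s in a..b, ω s :=
    intervalIntegral.integral_congr_ae haeeq
  -- integral bound via AM-GM
  set δ := b - a with hδ
  have hδpos : 0 < δ := by simp [hδ]; linarith
  set c := Real.sqrt (2 * M / δ) with hc
  have hcpos : 0 < c := Real.sqrt_pos.mpr (by positivity)
  have hc2 : c ^ 2 = 2 * M / δ := Real.sq_sqrt (by positivity)
  have hω2ab : IntervalIntegrable (fun s => ω s ^ 2) volume a b := by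
    refine hω2.mono_set ?_
    apply uIcc_subset_uIcc <;> rw [uIcc_of_le h0t] <;> assumption
  -- ∫_a^b ω² ≤ 2M
  have hω2_0a : IntervalIntegrable (fun s => ω s ^ 2) volume 0 a := by
    refine hω2.mono_set ?_
    apply uIcc_subset_uIcc <;> rw [uIcc_of_le h0t] <;> first | exact h0Icc | assumption
  have hω2_bt : IntervalIntegrable (fun s => ω s ^ 2) volume b t := by
    refine hω2.mono_set ?_
    apply uIcc_subset_uIcc <;> rw [uIcc_of_le h0t] <;>
      first | assumption | exact ⟨h0t, le_refl t⟩
  have hsplit1 : (∫ s in (0:ℝ)..a, ω s ^ 2) + (∫ s in a..t, ω s ^ 2)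
      = ∫ s in (0:ℝ)..t, ω s ^ 2 :=
    intervalIntegral.integral_add_adjacent_intervals hω2_0a
      (hω2.mono_set (by apply uIcc_subset_uIcc <;> rw [uIcc_of_le h0t] <;>
        first | assumption | exact ⟨h0t, le_refl t⟩))
  have hsplit2 : (∫ s in a..b, ω s ^ 2) + (∫ s in b..t, ω s ^ 2)
      = ∫ s in a..t, ω s ^ 2 :=
    intervalIntegral.integral_add_adjacent_intervals hω2ab hω2_bt
  have hnn1 : 0 ≤ ∫ s in (0:ℝ)..a, ω s ^ 2 :=
    intervalIntegral.integral_nonneg ha (fun s _ => sq_nonneg _)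
  have hnn2 : 0 ≤ ∫ s in b..t, ω s ^ 2 :=
    intervalIntegral.integral_nonneg hbt (fun s _ => sq_nonneg _)
  have hω2ab_le : ∫ s in a..b, ω s ^ 2 ≤ 2 * M := by linarith
  -- pointwise 2cω ≤ ω² + c² and 2c(-ω) ≤ ω² + c²
  have hmono1 : ∫ s in a..b, 2 * c * ω s ≤ ∫ s in a..b, (ω s ^ 2 + c ^ 2) := by
    apply intervalIntegral.integral_mono_on hab (hzωint.const_mul _)
      (hω2ab.add intervalIntegrable_const)
    intro s _
    nlinarith [sq_nonneg (ω s - c)]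
  have hmono2 : ∫ s in a..b, 2 * c * (-ω s) ≤ ∫ s in a..b, (ω s ^ 2 + c ^ 2) := by
    apply intervalIntegral.integral_mono_on hab ((hzωint.neg).const_mul _)
      (hω2ab.add intervalIntegrable_const)
    intro s _
    simp only [Pi.neg_apply]
    nlinarith [sq_nonneg (ω s + c), sq_nonneg (ω s - c)]
  have hL1 : ∫ s in a..b, 2 * c * ω s = 2 * c * ∫ s in a..b, ω s :=
    intervalIntegral.integral_const_mul _ _
  have hL2 : ∫ s in a..b, 2 * c * (-ω s) = 2 * c * ∫ s in a..b, (-ω s) :=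
    intervalIntegral.integral_const_mul _ _
  have hL2' : ∫ s in a..b, (-ω s) = -∫ s in a..b, ω s := intervalIntegral.integral_neg
  have hR : ∫ s in a..b, (ω s ^ 2 + c ^ 2)
      = (∫ s in a..b, ω s ^ 2) + (b - a) * c ^ 2 := by
    rw [intervalIntegral.integral_add hω2ab intervalIntegrable_const,
      intervalIntegral.integral_const, smul_eq_mul]
  have hRbound : (∫ s in a..b, ω s ^ 2) + (b - a) * c ^ 2 ≤ 4 * M := by
    have : (b - a) * c ^ 2 = 2 * M := by
      rw [hc2]; field_simp; exact hδ.symm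
    linarith
  have habs : |∫ s in a..b, ω s| ≤ 2 * M / c := by
    rw [abs_le]
    constructor
    · rw [neg_le, le_div_iff₀ hcpos]
      nlinarith [hmono2, hL2, hL2', hR, hRbound]
    · rw [le_div_iff₀ hcpos]
      nlinarith [hmono1, hL1, hR, hRbound]
  have hfinal : 2 * M / c = Real.sqrt (2 * M * δ) := by
    rw [eq_comm, eq_div_iff hcpos.ne']
    rw [hc, ← Real.sqrt_mul (by positivity)]
    rw [show 2 * M * δ * (2 * M / δ) = (2 * M) ^ 2 by field_simp]
    exact Real.sqrt_sq (by positivity)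
  calc |z b - z a| = |∫ s in a..b, ω s| := by rw [hzdiff, hintω]
    _ ≤ 2 * M / c := habs
    _ = Real.sqrt (2 * M * (b - a)) := by rw [hfinal]

/-- Uniform terminal continuity of backward reflected trajectories: for terminal
point `x > 0` and any control `ω` of energy at most `M`, the backward trajectory
stays within `ε` of `x` for `τ ≤ (ε/√(2M))²`, uniformly in `ω`. -/
theorem uniform_terminal_continuity
    (t x M : ℝ) (ht : 0 < t) (hx : 0 < x) (hM : 0 < M)
    (ω z z' : ℝ → ℝ)
    (hzc : ContinuousOn z (Icc 0 t))
    (hznn : ∀ s ∈ Icc 0 t, 0 ≤ z s)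
    (hzt : z t = x)
    (hint : IntervalIntegrable z' volume 0 t)
    (hAC : ∀ s ∈ Icc 0 t, z s = z 0 + ∫ r in (0:ℝ)..s, z' r)
    (hVI : ∀ᵐ s ∂(volume.restrict (Icc (0:ℝ) t)),
        ∀ q : ℝ, 0 ≤ q → (z' s - ω s) * (q - z s) ≤ 0)
    (hω2 : IntervalIntegrable (fun s => ω s ^ 2) volume 0 t)
    (hE : ∫ s in (0:ℝ)..t, ω s ^ 2 / 2 ≤ M) :
    ∀ ε ∈ Ioo 0 x, ∀ τ ∈ Icc (0:ℝ) ((ε / Real.sqrt (2 * M)) ^ 2),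
      τ ≤ t → |z (t - τ) - x| ≤ ε := by
  intro ε hε τ hτ hτt
  have hε0 : 0 < ε := hε.1
  have hεx : ε < x := hε.2
  have h2M : (0:ℝ) < 2 * M := by linarith
  have hE2 : ∫ s in (0:ℝ)..t, ω s ^ 2 ≤ 2 * M := by
    have : ∫ s in (0:ℝ)..t, ω s ^ 2 / 2 = (∫ s in (0:ℝ)..t, ω s ^ 2) / 2 :=
      intervalIntegral.integral_div _ _
    linarith [this ▸ hE]
  have hτ0 : ((ε / Real.sqrt (2 * M)) ^ 2) = ε ^ 2 / (2 * M) := by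
    rw [div_pow, Real.sq_sqrt h2M.le]
  have hτub : 2 * M * τ ≤ ε ^ 2 := by
    have := hτ.2
    rw [hτ0] at this
    rw [le_div_iff₀ h2M] at this
    linarith
  -- key comparison: √(2Mσ) ≤ ε for 0 ≤ σ ≤ τ
  have hkey : ∀ σ : ℝ, 0 ≤ σ → σ ≤ τ → Real.sqrt (2 * M * σ) ≤ ε := by
    intro σ hσ0 hστ
    have h1 : 2 * M * σ ≤ ε ^ 2 := by nlinarith
    calc Real.sqrt (2 * M * σ) ≤ Real.sqrt (ε ^ 2) := Real.sqrt_le_sqrt h1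
      _ = ε := Real.sqrt_sq hε0.le
  by_cases hB : ∀ σ ∈ Icc (0:ℝ) τ, x - ε < z (t - σ)
  · -- z stays above x - ε on the whole window
    have hpos : ∀ s ∈ Ioo (t - τ) t, 0 < z s := by
      intro s hs
      have hσ : t - s ∈ Icc (0:ℝ) τ := ⟨by linarith [hs.2], by linarith [hs.1]⟩
      have := hB (t - s) hσ
      have : x - ε < z s := by
        have h' : t - (t - s) = s := by ring
        rwa [h'] at this
      linarith
    have := key_est t M hM ω z z' hint hAC hVI hω2 hE2 (t - τ) t
      (by linarith [hτ.1]) (by linarith [hτ.1]) le_rfl hpos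
    rw [hzt] at this
    have h2 : 2 * M * (t - (t - τ)) = 2 * M * τ := by ring
    rw [h2] at this
    calc |z (t - τ) - x| = |x - z (t - τ)| := abs_sub_comm _ _
      _ ≤ Real.sqrt (2 * M * τ) := this
      _ ≤ ε := hkey τ hτ.1 le_rfl
  · push_neg at hB
    -- bad set nonempty; take its infimum
    set B : Set ℝ := Icc (0:ℝ) τ ∩ (fun σ => z (t - σ)) ⁻¹' Iic (x - ε) with hBdef
    have hBne : B.Nonempty := by
      obtain ⟨σ, hσ, hσ'⟩ := hB
      exact ⟨σ, hσ, hσ'⟩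
    have hgc : ContinuousOn (fun σ => z (t - σ)) (Icc 0 τ) := by
      apply hzc.comp (Continuous.continuousOn (by continuity))
      intro σ hσ
      exact ⟨by linarith [hσ.2], by linarith [hσ.1]⟩
    have hBclosed : IsClosed B :=
      hgc.preimage_isClosed_of_isClosed isClosed_Icc isClosed_Iic
    have hBbdd : BddBelow B := ⟨0, fun σ hσ => hσ.1.1⟩
    set σ0 := sInf B with hσ0def
    have hσ0B : σ0 ∈ B := hBclosed.csInf_mem hBne hBbdd
    have hσ0Icc : σ0 ∈ Icc (0:ℝ) τ := hσ0B.1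
    have hσ0le : z (t - σ0) ≤ x - ε := hσ0B.2
    -- z stays above x - ε strictly before σ0
    have hpos : ∀ s ∈ Ioo (t - σ0) t, 0 < z s := by
      intro s hs
      set σ := t - s with hσdef
      have hσlt : σ < σ0 := by simp [hσdef]; linarith [hs.1]
      have hσnB : σ ∉ B := notMem_of_lt_csInf hσlt hBbdd
      have hσIcc : σ ∈ Icc (0:ℝ) τ :=
        ⟨by simp [hσdef]; linarith [hs.2], by linarith [hσlt, hσ0Icc.2]⟩
      have : ¬ (z (t - σ) ≤ x - ε) := fun h => hσnB ⟨hσIcc, h⟩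
      push_neg at this
      have h' : t - σ = s := by simp [hσdef]
      rw [h'] at this
      linarith
    have hest := key_est t M hM ω z z' hint hAC hVI hω2 hE2 (t - σ0) t
      (by linarith [hσ0Icc.2]) (by linarith [hσ0Icc.1]) le_rfl hpos
    rw [hzt] at hest
    have h2 : 2 * M * (t - (t - σ0)) = 2 * M * σ0 := by ring
    rw [h2] at hest
    -- ε ≤ √(2Mσ0)
    have hεle : ε ≤ Real.sqrt (2 * M * σ0) := by
      have h3 : ε ≤ x - z (t - σ0) := by linarith
      have h4 : x - z (t - σ0) ≤ |x - z (t - σ0)| := le_abs_self _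
      linarith
    have hε2le : ε ^ 2 ≤ 2 * M * σ0 :=
      (Real.le_sqrt hε0.le (mul_nonneg h2M.le hσ0Icc.1)).mp hεle
    -- forces σ0 = τ
    have hσ0τ : σ0 = τ := by nlinarith [hσ0Icc.2]
    rw [← hσ0τ]
    have habs : |x - z (t - σ0)| ≤ ε := by
      calc |x - z (t - σ0)| ≤ Real.sqrt (2 * M * σ0) := hest
        _ ≤ ε := hkey σ0 hσ0Icc.1 hσ0Icc.2
    calc |z (t - σ0) - x| = |x - z (t - σ0)| := abs_sub_comm _ _
      _ ≤ ε := habs
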